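/- Let G be a connected graph on p vertices in which every vertex has eccentricity greater than 1. Then 2·W_ε(G) ≤ (p-1)·ε*(G) − ζ(G), where ε*(G) is the total eccentricity and ζ(G) = Σ_v deg(v)·e(v) is the eccentric connectivity index. Equality holds if and only if G has diameter 2. -/

import Mathlib

open Finset

namespace EccPaper

variable {V : Type*}

noncomputable def ecc [Fintype V] (G : SimpleGraph V) (v : V) : ℕ :=
  Finset.univ.sup (fun u => G.dist v u)

noncomputable def graphDiam [Fintype V] (G : SimpleGraph V) : ℕ :=
  Finset.univ.sup (fun v => ecc G v)

noncomputable def eccMatR [Fintype V] (G : SimpleGraph V) : Matrix V V ℝ :=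
  fun u v => if G.dist u v = min (ecc G u) (ecc G v) then (G.dist u v : ℝ) else 0

noncomputable def eccWiener [Fintype V] (G : SimpleGraph V) : ℝ :=
  (∑ u, ∑ v, eccMatR G u v) / 2

noncomputable def totalEcc [Fintype V] (G : SimpleGraph V) : ℝ :=
  ∑ v, (ecc G v : ℝ)

noncomputable def eccConnIndex [Fintype V] (G : SimpleGraph V) [DecidableRel G.Adj] : ℝ :=
  ∑ v, (G.degree v : ℝ) * (ecc G v : ℝ)

lemma eccMatR_isHermitian [Fintype V] (G : SimpleGraph V) : (eccMatR G).IsHermitian := by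
  ext i j
  simp only [eccMatR, Matrix.conjTranspose_apply, starRingEnd_apply, star_trivial]
  rw [SimpleGraph.dist_comm, min_comm]

noncomputable def eccEnergy [Fintype V] [DecidableEq V] (G : SimpleGraph V) : ℝ :=
  ∑ i, |(eccMatR_isHermitian G).eigenvalues i|

noncomputable def eccSpecRadius [Fintype V] [DecidableEq V] (G : SimpleGraph V) : ℝ :=
  ⨆ i, |(eccMatR_isHermitian G).eigenvalues i|

def eccGraph [Fintype V] (G : SimpleGraph V) : SimpleGraph V where
  Adj u v := u ≠ v ∧ G.dist u v = min (ecc G u) (ecc G v)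
  symm := by
    constructor
    rintro u v ⟨h1, h2⟩
    exact ⟨h1.symm, by rwa [SimpleGraph.dist_comm, min_comm]⟩
  loopless := ⟨fun v h => h.1 rfl⟩

def IsIrreducible [Fintype V] (M : Matrix V V ℝ) : Prop :=
  ¬ ∃ S : Set V, S.Nonempty ∧ S ≠ Set.univ ∧ ∀ i ∈ S, ∀ j ∉ S, M i j = 0

def centralGraph [DecidableEq V] (G : SimpleGraph V) [DecidableRel G.Adj] :
    SimpleGraph (V ⊕ G.edgeSet) where
  Adj x y :=
    match x, y with
    | Sum.inl u, Sum.inl v => u ≠ v ∧ ¬ G.Adj u v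
    | Sum.inl u, Sum.inr e => u ∈ (e : Sym2 V)
    | Sum.inr e, Sum.inl u => u ∈ (e : Sym2 V)
    | Sum.inr _, Sum.inr _ => False
  symm := by
    constructor
    rintro (u | e) (v | f) h
    · exact ⟨h.1.symm, fun hadj => h.2 hadj.symm⟩
    · exact h
    · exact h
    · exact h
  loopless := by
    constructor
    rintro (u | e) h
    · exact h.1 rfl
    · exact h

lemma dist_le_ecc [Fintype V] (G : SimpleGraph V) (u v : V) : G.dist u v ≤ ecc G u :=
  Finset.le_sup (Finset.mem_univ v)

lemma ecc_le_diam [Fintype V] (G : SimpleGraph V) (u : V) : ecc G u ≤ graphDiam G :=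
  Finset.le_sup (Finset.mem_univ u)

lemma exists_adj_dist_pred [Fintype V] {G : SimpleGraph V} (hconn : G.Connected) {u w : V}
    (h : 2 ≤ G.dist u w) : ∃ x, G.dist u x + 1 = G.dist u w := by
  obtain ⟨p, hp⟩ := (hconn u w).exists_walk_length_eq_dist
  set q := p.reverse with hq
  have hql : q.length = G.dist u w := by rw [hq, SimpleGraph.Walk.length_reverse, hp]
  have hnil : ¬ q.Nil := by
    rw [SimpleGraph.Walk.not_nil_iff_lt_length, hql]; omega
  refine ⟨q.getVert 1, ?_⟩
  have hadj : G.Adj w (q.getVert 1) := by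
    have := q.adj_getVert_succ (i := 0) (by rw [hql]; omega)
    rwa [q.getVert_zero] at this
  have h1 : G.dist u (q.getVert 1) ≤ G.dist u w - 1 := by
    have ht : q.tail.length + 1 = q.length := q.length_tail_add_one hnil
    have := SimpleGraph.dist_le q.tail
    rw [SimpleGraph.dist_comm] at this
    have hs : q.snd = q.getVert 1 := rfl
    have : G.dist u (q.getVert 1) ≤ q.tail.length := hs ▸ this
    omega
  have h2 : G.dist u w ≤ G.dist u (q.getVert 1) + 1 := by
    have htri := hconn.dist_triangle (u := u) (v := q.getVert 1) (w := w)
    have : G.dist (q.getVert 1) w = 1 := SimpleGraph.dist_eq_one_iff_adj.mpr hadj.symm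
    omega
  omega

/-- 2W_ε(G) ≤ (p-1)ε*(G) - ζ(G) when all eccentricities exceed 1,
with equality iff diam(G) = 2. -/
theorem stmt_10 {V : Type*} [Fintype V] (G : SimpleGraph V) [DecidableRel G.Adj]
    (hconn : G.Connected) (hecc : ∀ v : V, 1 < ecc G v) :
    2 * eccWiener G ≤ ((Fintype.card V : ℝ) - 1) * totalEcc G - eccConnIndex G ∧
    (2 * eccWiener G = ((Fintype.card V : ℝ) - 1) * totalEcc G - eccConnIndex G ↔
      graphDiam G = 2) := by
  classical
  have hne : Nonempty V := hconn.nonempty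
  set p := Fintype.card V with hp
  set T : V → Finset V := fun u => Finset.univ \ insert u (G.neighborFinset u) with hT
  have hmemT : ∀ u v : V, v ∈ T u ↔ v ≠ u ∧ ¬ G.Adj u v := by
    intro u v
    simp only [hT, Finset.mem_sdiff, Finset.mem_univ, true_and, Finset.mem_insert,
      SimpleGraph.mem_neighborFinset]
    tauto
  have hcardT : ∀ u : V, ((T u).card : ℝ) = (p : ℝ) - 1 - G.degree u := by
    intro u
    have hsub : insert u (G.neighborFinset u) ⊆ Finset.univ := Finset.subset_univ _
    have hu : u ∉ G.neighborFinset u := by simp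
    have hci : (insert u (G.neighborFinset u)).card = G.degree u + 1 := by
      rw [Finset.card_insert_of_notMem hu]; rfl
    have hle : G.degree u + 1 ≤ p := by
      have := Finset.card_le_card hsub
      rwa [hci, Finset.card_univ] at this
    have hc : (T u).card = p - (G.degree u + 1) := by
      rw [hT]
      simp only
      rw [Finset.card_sdiff_of_subset hsub, hci, Finset.card_univ]
    rw [hc, Nat.cast_sub hle]
    push_cast
    ring
  have hMzero : ∀ u v : V, v ∈ insert u (G.neighborFinset u) → eccMatR G u v = 0 := by
    intro u v hv
    rcases Finset.mem_insert.mp hv with heq | hv'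
    · subst heq
      have h0 : G.dist v v = 0 := SimpleGraph.dist_self
      have hc : ¬ (G.dist v v = min (ecc G v) (ecc G v)) := by
        rw [h0, min_self]
        have := hecc v
        omega
      simp only [eccMatR]
      rw [if_neg hc]
    · have hadj : G.Adj u v := (SimpleGraph.mem_neighborFinset G u v).mp hv'
      have h1 : G.dist u v = 1 := SimpleGraph.dist_eq_one_iff_adj.mpr hadj
      have : ¬ (G.dist u v = min (ecc G u) (ecc G v)) := by
        rw [h1]
        have h2 := hecc u; have h3 := hecc v
        rcases min_cases (ecc G u) (ecc G v) with ⟨h, _⟩ | ⟨h, _⟩ <;> omega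
      simp [eccMatR, this]
  have hrow : ∀ u : V, ∑ v, eccMatR G u v = ∑ v ∈ T u, eccMatR G u v := by
    intro u
    refine (Finset.sum_subset (Finset.subset_univ _) ?_).symm
    intro v _ hv
    apply hMzero
    by_contra hx
    exact hv ((Finset.mem_sdiff).mpr ⟨Finset.mem_univ v, hx⟩)
  have hMle : ∀ u v : V, eccMatR G u v ≤ (ecc G u : ℝ) := by
    intro u v
    unfold eccMatR
    split
    · exact_mod_cast dist_le_ecc G u v
    · exact Nat.cast_nonneg _
  have key : ∀ u : V, ∑ v, eccMatR G u v ≤ ((T u).card : ℝ) * (ecc G u : ℝ) := by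
    intro u
    rw [hrow u]
    calc ∑ v ∈ T u, eccMatR G u v ≤ ∑ _v ∈ T u, (ecc G u : ℝ) :=
          Finset.sum_le_sum (fun v _ => hMle u v)
      _ = ((T u).card : ℝ) * (ecc G u : ℝ) := by rw [Finset.sum_const, nsmul_eq_mul]
  have hsum : 2 * eccWiener G = ∑ u, ∑ v, eccMatR G u v := by
    unfold eccWiener; ring
  have hRHS : ((p : ℝ) - 1) * totalEcc G - eccConnIndex G
      = ∑ u, ((T u).card : ℝ) * (ecc G u : ℝ) := by
    unfold totalEcc eccConnIndex
    rw [Finset.mul_sum, ← Finset.sum_sub_distrib]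
    refine Finset.sum_congr rfl fun u _ => ?_
    rw [hcardT u]
    ring
  constructor
  · rw [hsum, hRHS]
    exact Finset.sum_le_sum fun u _ => key u
  constructor
  · -- equality implies diam = 2
    intro heq
    rw [hsum, hRHS] at heq
    have hpt := (Finset.sum_eq_sum_iff_of_le (fun u (_ : u ∈ Finset.univ) => key u)).mp heq
    have hentry : ∀ u v : V, v ∈ T u → eccMatR G u v = (ecc G u : ℝ) := by
      intro u v hv
      have hr := hpt u (Finset.mem_univ u)
      rw [hrow u] at hr
      have hr' : ∑ v ∈ T u, eccMatR G u v = ∑ _v ∈ T u, (ecc G u : ℝ) := by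
        rw [hr, Finset.sum_const, nsmul_eq_mul]
      exact (Finset.sum_eq_sum_iff_of_le (fun v _ => hMle u v)).mp hr' v hv
    have hpair : ∀ u v : V, u ≠ v → ¬ G.Adj u v → G.dist u v = ecc G u := by
      intro u v huv hadj
      have hv : v ∈ T u := (hmemT u v).mpr ⟨huv.symm, hadj⟩
      have := hentry u v hv
      unfold eccMatR at this
      split at this
      · rename_i hcond
        have hdu : G.dist u v = ecc G u := by exact_mod_cast this
        exact hdu
      · have h2 := hecc u
        have : (ecc G u : ℝ) = 0 := this.symm
        have : ecc G u = 0 := by exact_mod_cast this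
        omega
    have h2 : ∀ u : V, ecc G u ≤ 2 := by
      intro u
      by_contra hgt
      push_neg at hgt
      obtain ⟨w, _, hw⟩ := Finset.exists_mem_eq_sup Finset.univ Finset.univ_nonempty
        (fun x => G.dist u x)
      have hw' : ecc G u = G.dist u w := hw
      have hd3 : 3 ≤ G.dist u w := by omega
      obtain ⟨x, hx⟩ := exists_adj_dist_pred hconn (by omega : 2 ≤ G.dist u w)
      have hxu : u ≠ x := by
        intro h; rw [← h, SimpleGraph.dist_self] at hx; omega
      have hxadj : ¬ G.Adj u x := by
        intro h
        have := SimpleGraph.dist_eq_one_iff_adj.mpr h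
        omega
      have := hpair u x hxu hxadj
      omega
    have hd2 : graphDiam G ≤ 2 := Finset.sup_le fun u _ => h2 u
    have v0 := hne.some
    have : 2 ≤ graphDiam G := le_trans (hecc v0) (ecc_le_diam G v0)
    omega
  · -- diam = 2 implies equality
    intro hdiam
    have hecc2 : ∀ v : V, ecc G v = 2 := fun v =>
      le_antisymm (hdiam ▸ ecc_le_diam G v) (hecc v)
    rw [hsum, hRHS]
    refine Finset.sum_congr rfl fun u _ => ?_
    rw [hrow u]
    have hentry : ∀ v ∈ T u, eccMatR G u v = (ecc G u : ℝ) := by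
      intro v hv
      obtain ⟨hvu, hadj⟩ := (hmemT u v).mp hv
      have hd0 : G.dist u v ≠ 0 := by
        have := hconn.pos_dist_of_ne (Ne.symm hvu)
        omega
      have hd1 : G.dist u v ≠ 1 := fun h =>
        hadj (SimpleGraph.dist_eq_one_iff_adj.mp h)
      have hdle : G.dist u v ≤ 2 := (hecc2 u) ▸ dist_le_ecc G u v
      have hd : G.dist u v = 2 := by omega
      have hcond : G.dist u v = min (ecc G u) (ecc G v) := by
        rw [hd, hecc2 u, hecc2 v, min_self]
      unfold eccMatR
      rw [if_pos hcond, hd, hecc2 u]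
    rw [Finset.sum_congr rfl hentry, Finset.sum_const, nsmul_eq_mul]
end EccPaper
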